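/- Let α, β, θ > 0, s ∈ ℝ, ε > 0, and N ∈ ℕ with N ≥ 1. Then for every k ∈ ℕ, every t ≥ 0, and every ξ ∈ ℝ, if f_k(t, ξ) ≠ 0 then there exist j₁, j₂ ∈ ℕ₀ with j₁ + j₂ = k such that j₂ N + j₁ N^{−θ} ≤ ξ ≤ j₂ N + (k + j₁) N^{−θ}. In other words, f_k(t,·) vanishes identically outside the finite union of intervals ⋃_{j₁+j₂=k} [j₂ N + j₁ N^{−θ}, j₂ N + (k+j₁) N^{−θ}]. -/
import Mathlib


open MeasureTheory

/-- The Fourier transform of the initial datum: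
`φ̂(ξ) = ε N^{θ/2} 1_{[N^{−θ}, 2N^{−θ}]}(ξ) + ε N^{−s+θ/2} 1_{[N, N+N^{−θ}]}(ξ)`. -/
noncomputable def phiHat (θ s ε : ℝ) (N : ℕ) (ξ : ℝ) : ℝ :=
  ε * (N : ℝ) ^ (θ / 2) *
      Set.indicator (Set.Icc ((N : ℝ) ^ (-θ)) (2 * (N : ℝ) ^ (-θ))) (fun _ => (1 : ℝ)) ξ +
    ε * (N : ℝ) ^ (-s + θ / 2) *
      Set.indicator (Set.Icc ((N : ℝ)) ((N : ℝ) + (N : ℝ) ^ (-θ))) (fun _ => (1 : ℝ)) ξ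

/-- The Picard iterates on the Fourier side for `∂ₜu + iD^α u = u D^β u` with datum `F`. -/
noncomputable def picard (α β : ℝ) (F : ℝ → ℂ) : ℕ → ℝ → ℝ → ℂ
  | 0 => fun _ _ => 0
  | 1 => fun t ξ => Complex.exp (-Complex.I * (t : ℂ) * ((|ξ| ^ α : ℝ) : ℂ)) * F ξ
  | (k + 2) => fun t ξ =>
      ∑ i ∈ (Finset.range (k + 1)).attach,
        ∫ t' in (0:ℝ)..t,
          Complex.exp (-Complex.I * ((t - t' : ℝ) : ℂ) * ((|ξ| ^ α : ℝ) : ℂ)) *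
            ∫ η : ℝ, picard α β F (i.1 + 1) t' (ξ - η) * ((|η| ^ β : ℝ) : ℂ) *
              picard α β F (k + 1 - i.1) t' η
  termination_by k => k
  decreasing_by
  all_goals (have h := i.2; simp only [Finset.mem_range] at h; omega)

theorem aux_support (α β θ s ε : ℝ) (N : ℕ) (k : ℕ) :
    ∀ (t ξ : ℝ), picard α β (fun x => ((phiHat θ s ε N x : ℝ) : ℂ)) k t ξ ≠ 0 →
    ∃ j₁ j₂ : ℕ, j₁ + j₂ = k ∧
      (j₂ : ℝ) * (N : ℝ) + (j₁ : ℝ) * (N : ℝ) ^ (-θ) ≤ ξ ∧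
      ξ ≤ (j₂ : ℝ) * (N : ℝ) + ((k : ℝ) + (j₁ : ℝ)) * (N : ℝ) ^ (-θ) := by
  induction k using Nat.strong_induction_on with
  | _ k ih =>
    match k with
    | 0 => intro t ξ hne; simp [picard] at hne
    | 1 =>
      intro t ξ hne
      rw [picard] at hne
      have hF : phiHat θ s ε N ξ ≠ 0 := by
        intro h; apply hne; simp [h]
      unfold phiHat at hF
      have hor : Set.indicator (Set.Icc ((N : ℝ) ^ (-θ)) (2 * (N : ℝ) ^ (-θ))) (fun _ => (1 : ℝ)) ξ ≠ 0 ∨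
          Set.indicator (Set.Icc ((N : ℝ)) ((N : ℝ) + (N : ℝ) ^ (-θ))) (fun _ => (1 : ℝ)) ξ ≠ 0 := by
        by_contra h; push_neg at h; apply hF; rw [h.1, h.2]; ring
      rcases hor with h | h
      · have hmem : ξ ∈ Set.Icc ((N : ℝ) ^ (-θ)) (2 * (N : ℝ) ^ (-θ)) := by
          by_contra hm; exact h (Set.indicator_of_notMem hm _)
        obtain ⟨h1, h2⟩ := hmem
        exact ⟨1, 0, by norm_num, by push_cast; linarith, by push_cast; linarith⟩
      · have hmem : ξ ∈ Set.Icc ((N : ℝ)) ((N : ℝ) + (N : ℝ) ^ (-θ)) := by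
          by_contra hm; exact h (Set.indicator_of_notMem hm _)
        obtain ⟨h1, h2⟩ := hmem
        exact ⟨0, 1, by norm_num, by push_cast; linarith, by push_cast; linarith⟩
    | (m + 2) =>
      intro t ξ hne
      rw [picard] at hne
      obtain ⟨i, -, hi⟩ := Finset.exists_ne_zero_of_sum_ne_zero hne
      obtain ⟨t', ht'⟩ : ∃ t', Complex.exp (-Complex.I * ((t - t' : ℝ) : ℂ) * ((|ξ| ^ α : ℝ) : ℂ)) *
            (∫ η : ℝ, picard α β (fun x => ((phiHat θ s ε N x : ℝ) : ℂ)) (i.1 + 1) t' (ξ - η) * ((|η| ^ β : ℝ) : ℂ) *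
              picard α β (fun x => ((phiHat θ s ε N x : ℝ) : ℂ)) (m + 1 - i.1) t' η) ≠ 0 := by
        by_contra h; push_neg at h
        apply hi
        rw [show (fun t' => Complex.exp (-Complex.I * ((t - t' : ℝ) : ℂ) * ((|ξ| ^ α : ℝ) : ℂ)) *
            (∫ η : ℝ, picard α β (fun x => ((phiHat θ s ε N x : ℝ) : ℂ)) (i.1 + 1) t' (ξ - η) * ((|η| ^ β : ℝ) : ℂ) *
              picard α β (fun x => ((phiHat θ s ε N x : ℝ) : ℂ)) (m + 1 - i.1) t' η)) = fun _ => (0:ℂ) from funext h]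
        exact intervalIntegral.integral_zero
      have hint : (∫ η : ℝ, picard α β (fun x => ((phiHat θ s ε N x : ℝ) : ℂ)) (i.1 + 1) t' (ξ - η) * ((|η| ^ β : ℝ) : ℂ) *
              picard α β (fun x => ((phiHat θ s ε N x : ℝ) : ℂ)) (m + 1 - i.1) t' η) ≠ 0 :=
        fun h => ht' (by rw [h, mul_zero])
      obtain ⟨η, hη⟩ : ∃ η : ℝ, picard α β (fun x => ((phiHat θ s ε N x : ℝ) : ℂ)) (i.1 + 1) t' (ξ - η) * ((|η| ^ β : ℝ) : ℂ) *
              picard α β (fun x => ((phiHat θ s ε N x : ℝ) : ℂ)) (m + 1 - i.1) t' η ≠ 0 := by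
        by_contra h; push_neg at h
        apply hint
        rw [show (fun η => picard α β (fun x => ((phiHat θ s ε N x : ℝ) : ℂ)) (i.1 + 1) t' (ξ - η) * ((|η| ^ β : ℝ) : ℂ) *
              picard α β (fun x => ((phiHat θ s ε N x : ℝ) : ℂ)) (m + 1 - i.1) t' η) = fun _ => (0:ℂ) from funext h]
        exact integral_zero _ _
      have h1 : picard α β (fun x => ((phiHat θ s ε N x : ℝ) : ℂ)) (i.1 + 1) t' (ξ - η) ≠ 0 :=
        fun h => hη (by rw [h]; ring)
      have h2 : picard α β (fun x => ((phiHat θ s ε N x : ℝ) : ℂ)) (m + 1 - i.1) t' η ≠ 0 :=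
        fun h => hη (by rw [h]; ring)
      have hilt : i.1 < m + 1 := Finset.mem_range.mp i.2
      obtain ⟨a₁, a₂, ha, ha1, ha2⟩ := ih (i.1 + 1) (by omega) t' (ξ - η) h1
      obtain ⟨b₁, b₂, hb, hb1, hb2⟩ := ih (m + 1 - i.1) (by omega) t' η h2
      refine ⟨a₁ + b₁, a₂ + b₂, by omega, ?_, ?_⟩
      · push_cast; linarith
      · have hcast : ((i.1 + 1 : ℕ) : ℝ) + ((m + 1 - i.1 : ℕ) : ℝ) = ((m + 2 : ℕ) : ℝ) := by
          have : (i.1 + 1) + (m + 1 - i.1) = m + 2 := by omega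
          exact_mod_cast congrArg (Nat.cast : ℕ → ℝ) this
        push_cast at hcast ha2 ⊢
        rw [show ((m + 1 - i.1 : ℕ) : ℝ) = (m : ℝ) + 2 - ((i.1 : ℝ) + 1) from by linarith] at hb2
        linarith

/-- Frequency support of the `k`-th Picard iterate: `f_k(t,·)` vanishes outside
`⋃_{j₁+j₂=k} [j₂N + j₁N^{−θ}, j₂N + (k+j₁)N^{−θ}]`. -/
theorem support_picard_iterate (α β θ s ε : ℝ) (hα : 0 < α) (hβ : 0 < β) (hθ : 0 < θ)
    (hε : 0 < ε) (N : ℕ) (hN : 1 ≤ N) (k : ℕ) (hk : 1 ≤ k) (t : ℝ) (ht : 0 ≤ t) (ξ : ℝ)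
    (hne : picard α β (fun x => ((phiHat θ s ε N x : ℝ) : ℂ)) k t ξ ≠ 0) :
    ∃ j₁ j₂ : ℕ, j₁ + j₂ = k ∧
      (j₂ : ℝ) * (N : ℝ) + (j₁ : ℝ) * (N : ℝ) ^ (-θ) ≤ ξ ∧
      ξ ≤ (j₂ : ℝ) * (N : ℝ) + ((k : ℝ) + (j₁ : ℝ)) * (N : ℝ) ^ (-θ) := by
  exact aux_support α β θ s ε N k t ξ hne
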